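/- Let c₁ > 0, b̄ ≥ 0, let m : [0,∞) → ℝ³ be continuous, let s : [0,∞) → ℝ satisfy |s(t)| ≤ 1 for all t ≥ 0, and let β : [0,∞) → ℝ³ satisfy ‖β(t)‖ ≤ b̄ for all t ≥ 0. If v : [0,∞) → ℝ³ is differentiable and satisfies (d/dt) v(t) = v(t) × m(t) − c₁ v(t) − (1/2) s(t) β(t) for all t ≥ 0, then ‖v(t)‖ ≤ ‖v(0)‖ e^{−c₁ t} + (b̄/(2c₁)) (1 − e^{−c₁ t}) for all t ≥ 0. In particular, if the gyroscope-bias error is bounded by b̄, the vector part of the error quaternion converges globally exponentially, with rate c₁, to the ball of radius b̄/(2c₁) around zero. -/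

import Mathlib

open Filter Real Topology

noncomputable section

/-- ℝ³ with the Euclidean norm. -/
abbrev E3 := EuclideanSpace ℝ (Fin 3)

/-- Cross product on ℝ³. -/
def cross (u v : E3) : E3 :=
  WithLp.toLp 2 ![u 1 * v 2 - u 2 * v 1, u 2 * v 0 - u 0 * v 2, u 0 * v 1 - u 1 * v 0]

/-- The quaternion with real (scalar) part `a` and vector (imaginary) part `v`. -/
def quat (a : ℝ) (v : E3) : Quaternion ℝ := ⟨a, v 0, v 1, v 2⟩

/-- The vector (imaginary) part of a quaternion, as an element of ℝ³. -/
def qvec (q : Quaternion ℝ) : E3 := WithLp.toLp 2 ![q.imI, q.imJ, q.imK]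

lemma inner_cross_self (u w : E3) : (inner ℝ u (cross u w) : ℝ) = 0 := by
  simp [cross, PiLp.inner_apply, Fin.sum_univ_three, RCLike.inner_apply, Matrix.cons_val_zero,
    Matrix.cons_val_one, Matrix.head_cons]
  ring

lemma cross_zero_left (w : E3) : cross 0 w = 0 := by
  ext i
  fin_cases i <;> simp [cross]

/-- If the gyroscope-bias error `β` is bounded by `b̄` and the scalar part
`s` satisfies `|s(t)| ≤ 1`, then the vector part of the error quaternion, which obeys
`v̇ = v × m(t) − c₁ v − (1/2) s(t) β(t)`, satisfies the global exponential ultimate bound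
`‖v(t)‖ ≤ ‖v(0)‖ e^{−c₁ t} + (b̄/(2c₁))(1 − e^{−c₁ t})` for all `t ≥ 0`. -/
theorem stmt_2 (c₁ bbar : ℝ) (hc₁ : 0 < c₁) (hbbar : 0 ≤ bbar)
    (m : ℝ → E3) (hm : Continuous m)
    (s : ℝ → ℝ) (hs : ∀ t, 0 ≤ t → |s t| ≤ 1)
    (β : ℝ → E3) (hβ : ∀ t, 0 ≤ t → ‖β t‖ ≤ bbar)
    (v : ℝ → E3)
    (hv : ∀ t, 0 ≤ t →
      HasDerivAt v (cross (v t) (m t) - c₁ • v t - (s t / 2) • β t) t) :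
    ∀ t, 0 ≤ t →
      ‖v t‖ ≤ ‖v 0‖ * Real.exp (-c₁ * t) + bbar / (2 * c₁) * (1 - Real.exp (-c₁ * t)) := by
  classical
  intro t ht
  set d : ℝ → E3 := fun τ => cross (v τ) (m τ) - c₁ • v τ - (s τ / 2) • β τ with hd
  set f' : ℝ → ℝ := fun τ => if v τ = 0 then ‖d τ‖ else (inner ℝ (v τ) (d τ) : ℝ) / ‖v τ‖ with hf'def
  -- key inner-product computation
  have hinner : ∀ τ, 0 ≤ τ → (inner ℝ (v τ) (d τ) : ℝ) = -(c₁ * ‖v τ‖ ^ 2) - (s τ / 2) * inner ℝ (v τ) (β τ) := by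
    intro τ hτ
    simp only [hd, inner_sub_right, real_inner_smul_right, inner_cross_self,
      real_inner_self_eq_norm_sq]
    ring
  have hbound : ∀ x ∈ Set.Ico (0:ℝ) t, f' x ≤ (-c₁) * ‖v x‖ + bbar / 2 := by
    intro x hx
    have hx0 : (0:ℝ) ≤ x := hx.1
    by_cases hvx : v x = 0
    · simp only [hf'def, if_pos hvx]
      have : d x = -((s x / 2) • β x) := by
        simp [hd, hvx, cross_zero_left]
      rw [this, hvx]
      simp only [norm_neg, norm_smul, norm_zero, mul_zero, neg_zero, zero_add]
      have h1 : ‖s x / 2‖ ≤ 1/2 := by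
        rw [Real.norm_eq_abs, abs_div]
        have := hs x hx0
        rw [abs_of_pos (by norm_num : (0:ℝ) < 2)]
        linarith [abs_nonneg (s x)]
      calc ‖s x / 2‖ * ‖β x‖ ≤ (1/2) * bbar :=
            mul_le_mul h1 (hβ x hx0) (norm_nonneg _) (by norm_num)
        _ = bbar / 2 := by ring
    · simp only [hf'def, if_neg hvx]
      have hnv : 0 < ‖v x‖ := norm_pos_iff.2 hvx
      rw [hinner x hx0, div_le_iff₀ hnv]
      have habs : |(s x / 2) * inner ℝ (v x) (β x)| ≤ (bbar/2) * ‖v x‖ := by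
        rw [abs_mul]
        calc |s x / 2| * |(inner ℝ (v x) (β x) : ℝ)| ≤ (1/2) * (‖v x‖ * bbar) := by
              apply mul_le_mul
              · rw [abs_div, abs_of_pos (by norm_num : (0:ℝ) < 2)]
                linarith [hs x hx0]
              · exact (abs_real_inner_le_norm _ _).trans
                  (mul_le_mul_of_nonneg_left (hβ x hx0) (norm_nonneg _))
              · exact abs_nonneg _
              · norm_num
          _ = (bbar/2) * ‖v x‖ := by ring
      nlinarith [abs_nonneg ((s x / 2) * (inner ℝ (v x) (β x) : ℝ)),
        neg_abs_le ((s x / 2) * (inner ℝ (v x) (β x) : ℝ)), hnv]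
  have hcont : ContinuousOn (fun τ => ‖v τ‖) (Set.Icc 0 t) := by
    intro τ hτ
    exact ((hv τ hτ.1).continuousAt.norm).continuousWithinAt
  have hslope : ∀ x ∈ Set.Ico (0:ℝ) t, ∀ r, f' x < r →
      ∃ᶠ z in 𝓝[>] x, (z - x)⁻¹ * (‖v z‖ - ‖v x‖) < r := by
    intro x hx r hr
    have hx0 : (0:ℝ) ≤ x := hx.1
    by_cases hvx : v x = 0
    · simp only [hf'def, if_pos hvx] at hr
      have htend : Tendsto (fun z => ‖slope v x z‖) (𝓝[>] x) (𝓝 ‖d x‖) := by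
        have := (hasDerivAt_iff_tendsto_slope.1 (hv x hx0))
        exact ((this.mono_left (nhdsWithin_mono x (by intro z hz; exact ne_of_gt hz))).norm)
      have hev : ∀ᶠ z in 𝓝[>] x, ‖slope v x z‖ < r :=
        htend.eventually (Filter.Tendsto.eventually_lt_const hr tendsto_id) |>.mono (fun z hz => hz)
      refine (hev.and self_mem_nhdsWithin).frequently.mono ?_
      rintro z ⟨hz, hzx⟩
      have hzx' : 0 < z - x := sub_pos.2 hzx
      have : (z - x)⁻¹ * (‖v z‖ - ‖v x‖) = ‖slope v x z‖ := by
        rw [slope_def_module, norm_smul, hvx, sub_zero, norm_zero, sub_zero,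
          Real.norm_eq_abs, abs_of_pos (inv_pos.2 hzx')]
      rw [this]; exact hz
    · simp only [hf'def, if_neg hvx] at hr
      have hnv : (0:ℝ) < ‖v x‖ := norm_pos_iff.2 hvx
      have hsq : HasDerivAt (fun τ => ‖v τ‖ ^ 2) (2 * inner ℝ (v x) (d x)) x :=
        (hv x hx0).norm_sq
      have hne : ‖v x‖ ^ 2 ≠ 0 := by positivity
      have hsqrt := hsq.sqrt hne
      have heq : (fun τ => Real.sqrt (‖v τ‖ ^ 2)) = fun τ => ‖v τ‖ := by
        funext τ; rw [Real.sqrt_sq (norm_nonneg _)]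
      rw [heq] at hsqrt
      have hval : 2 * (inner ℝ (v x) (d x) : ℝ) / (2 * Real.sqrt (‖v x‖ ^ 2)) =
          (inner ℝ (v x) (d x) : ℝ) / ‖v x‖ := by
        rw [Real.sqrt_sq (norm_nonneg _)]
        field_simp
      rw [hval] at hsqrt
      have htend := hasDerivAt_iff_tendsto_slope.1 hsqrt
      have htend' : Tendsto (slope (fun τ => ‖v τ‖) x) (𝓝[>] x)
          (𝓝 ((inner ℝ (v x) (d x) : ℝ) / ‖v x‖)) :=
        htend.mono_left (nhdsWithin_mono x (by intro z hz; exact ne_of_gt hz))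
      have hev : ∀ᶠ z in 𝓝[>] x, slope (fun τ => ‖v τ‖) x z < r :=
        htend'.eventually (Filter.Tendsto.eventually_lt_const hr tendsto_id)
      refine hev.frequently.mono ?_
      intro z hz
      rwa [slope_def_field, div_eq_inv_mul] at hz
  have key := le_gronwallBound_of_liminf_deriv_right_le (f := fun τ => ‖v τ‖) (f' := f')
    (δ := ‖v 0‖) (K := -c₁) (ε := bbar / 2) (a := 0) (b := t) hcont hslope le_rfl hbound
  have := key t (Set.mem_Icc.2 ⟨ht, le_rfl⟩)
  rw [gronwallBound_of_K_ne_0 (by linarith : -c₁ ≠ 0)] at this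
  simp only [sub_zero] at this
  calc ‖v t‖ ≤ ‖v 0‖ * Real.exp (-c₁ * t) + bbar / 2 / (-c₁) * (Real.exp (-c₁ * t) - 1) := this
    _ = ‖v 0‖ * Real.exp (-c₁ * t) + bbar / (2 * c₁) * (1 - Real.exp (-c₁ * t)) := by
        field_simp
        ring
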